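/- arXiv:2302.03658 — 3 statements merged into one kernel-verified Lean document; each statement's English description precedes it below -/
import Mathlib

section
/- Let X ~ Binomial(k_R, 2k_R/n) (assume 2k_R ≤ n) and let λ > 0 and k_L ≥ 1. If λ ≤ (1/(2k_L))·log(1 + (n/k_R²)·(log 2)/2), then E[exp(2λ k_L X)] ≤ 2. -/
open Finset

/-- If `X ~ Binomial(k_R, 2k_R/n)` with `2k_R ≤ n`, `λ > 0`, `k_L ≥ 1`, and
`λ ≤ (1/(2k_L))·log(1 + (n/k_R²)·(log 2)/2)`, then `E[exp(2λ k_L X)] ≤ 2`. -/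
theorem binomial_mgf_le_two (n kR kL : ℕ) (hn : 0 < n) (hkR : 0 < kR) (hkL : 1 ≤ kL)
    (h2 : 2 * kR ≤ n) (lam : ℝ) (hlam : 0 < lam)
    (hcond : lam ≤ (1 / (2 * (kL : ℝ))) *
      Real.log (1 + ((n : ℝ) / (kR : ℝ) ^ 2) * (Real.log 2 / 2))) :
    ∑ i ∈ Finset.range (kR + 1),
        (kR.choose i : ℝ) * ((2 * kR : ℝ) / n) ^ i * (1 - (2 * kR : ℝ) / n) ^ (kR - i) *
          Real.exp (2 * lam * kL * i) ≤ 2 := by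
  have hn0 : (0:ℝ) < n := by exact_mod_cast hn
  have hkR0 : (0:ℝ) < kR := by exact_mod_cast hkR
  have hkL0 : (1:ℝ) ≤ kL := by exact_mod_cast hkL
  set p : ℝ := (2 * kR : ℝ) / n with hp
  set t : ℝ := 2 * lam * kL with ht
  have ht0 : 0 < t := by
    have : (0:ℝ) < kL := by linarith
    positivity
  have hp0 : 0 ≤ p := by positivity
  set c : ℝ := ((n : ℝ) / (kR : ℝ) ^ 2) * (Real.log 2 / 2) with hc
  have hc0 : 0 ≤ c := by
    have := Real.log_nonneg (by norm_num : (1:ℝ) ≤ 2)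
    positivity
  -- exp t ≤ 1 + c
  have hexp : Real.exp t ≤ 1 + c := by
    have hle : t ≤ Real.log (1 + c) := by
      have hkLpos : (0:ℝ) < 2 * kL := by linarith
      calc t = 2 * (kL:ℝ) * lam := by rw [ht]; ring
        _ ≤ 2 * (kL:ℝ) * ((1 / (2 * (kL : ℝ))) * Real.log (1 + c)) := by
            apply mul_le_mul_of_nonneg_left hcond (by linarith)
        _ = Real.log (1 + c) := by field_simp
    calc Real.exp t ≤ Real.exp (Real.log (1 + c)) := Real.exp_le_exp.mpr hle
      _ = 1 + c := Real.exp_log (by linarith)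
  set a : ℝ := p * (Real.exp t - 1) with ha
  have ha0 : 0 ≤ a := by
    apply mul_nonneg hp0
    have : (1:ℝ) ≤ Real.exp t := by
      rw [show (1:ℝ) = Real.exp 0 by simp]
      exact Real.exp_le_exp.mpr ht0.le
    linarith
  have haub : a ≤ Real.log 2 / kR := by
    have h1 : a ≤ p * c := by
      apply mul_le_mul_of_nonneg_left (by linarith) hp0
    have h2 : p * c = Real.log 2 / kR := by
      rw [hp, hc]
      field_simp
    linarith
  -- rewrite the sum
  have hsum : (∑ i ∈ Finset.range (kR + 1),
      (kR.choose i : ℝ) * p ^ i * (1 - p) ^ (kR - i) * Real.exp (t * i))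
      = (p * Real.exp t + (1 - p)) ^ kR := by
    rw [add_pow]
    apply Finset.sum_congr rfl
    intro i _
    have hi : Real.exp (t * i) = (Real.exp t) ^ i := by
      rw [mul_comm, Real.exp_nat_mul]
    rw [hi, mul_pow]
    ring
  have heq : ∀ i, (2 : ℝ) * lam * kL * i = t * i := fun i => by rw [ht]
  calc ∑ i ∈ Finset.range (kR + 1),
        (kR.choose i : ℝ) * p ^ i * (1 - p) ^ (kR - i) * Real.exp (2 * lam * kL * i)
      = (p * Real.exp t + (1 - p)) ^ kR := by
        rw [← hsum]
    _ = (1 + a) ^ kR := by rw [ha]; ring_nf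
    _ = (a + 1) ^ kR := by ring
    _ ≤ (Real.exp a) ^ kR :=
        pow_le_pow_left₀ (by linarith) (Real.add_one_le_exp a) kR
    _ = Real.exp (kR * a) := by rw [← Real.exp_nat_mul]
    _ ≤ Real.exp (Real.log 2) := by
        apply Real.exp_le_exp.mpr
        calc (kR : ℝ) * a ≤ kR * (Real.log 2 / kR) :=
              mul_le_mul_of_nonneg_left haub hkR0.le
          _ = Real.log 2 := by field_simp
    _ = 2 := Real.exp_log (by norm_num)
end

section
/- If H ~ Hypergeometric(n, K, K) (number of successes drawing K from a population of n with K successes) and K ≤ n/2, then H is stochastically dominated by Binomial(K, 2K/n). -/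
open Finset

noncomputable def fH (n K i : ℕ) : ℝ :=
  ((K.choose i : ℝ) * ((n - K).choose (K - i) : ℝ)) / (n.choose K : ℝ)

noncomputable def fB (n K i : ℕ) : ℝ :=
  (K.choose i : ℝ) * ((2 * K : ℝ) / n) ^ i * (1 - (2 * K : ℝ) / n) ^ (K - i)

lemma fH_pos (n K i : ℕ) (h : 2 * K ≤ n) (hi : i ≤ K) : 0 < fH n K i := by
  have h1 : 0 < K.choose i := Nat.choose_pos hi
  have h2 : 0 < (n - K).choose (K - i) := Nat.choose_pos (by omega)
  have h3 : 0 < n.choose K := Nat.choose_pos (by omega)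
  unfold fH
  positivity

lemma fB_nonneg (n K i : ℕ) (hK : 0 < K) (h : 2 * K ≤ n) : 0 ≤ fB n K i := by
  have hn : (0:ℝ) < n := by exact_mod_cast (by omega : 0 < n)
  have hp : (0:ℝ) ≤ (2 * K : ℝ) / n := by positivity
  have hq : (0:ℝ) ≤ 1 - (2 * K : ℝ) / n := by
    rw [sub_nonneg, div_le_one hn]
    exact_mod_cast h
  unfold fB
  positivity

lemma sum_fH (n K : ℕ) (h : 2 * K ≤ n) :
    ∑ i ∈ Finset.range (K + 1), fH n K i = 1 := by
  have hv : ∑ i ∈ Finset.range (K + 1), K.choose i * (n - K).choose (K - i) = n.choose K := by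
    have := Nat.add_choose_eq K (n - K) K
    rw [Nat.add_sub_cancel' (by omega : K ≤ n)] at this
    rw [this, Finset.Nat.sum_antidiagonal_eq_sum_range_succ_mk]
  have hD : (0:ℝ) < n.choose K := by exact_mod_cast Nat.choose_pos (by omega : K ≤ n)
  unfold fH
  rw [← Finset.sum_div]
  rw [div_eq_one_iff_eq (ne_of_gt hD)]
  exact_mod_cast hv

lemma sum_fB (n K : ℕ) (hK : 0 < K) (h : 2 * K ≤ n) :
    ∑ i ∈ Finset.range (K + 1), fB n K i = 1 := by
  have hn : (0:ℝ) < n := by exact_mod_cast (by omega : 0 < n)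
  set p : ℝ := (2 * K : ℝ) / n with hp
  have := add_pow p (1 - p) K
  have hpq : p + (1 - p) = 1 := by ring
  rw [hpq, one_pow] at this
  rw [this]
  apply Finset.sum_congr rfl
  intro i _
  unfold fB
  ring

lemma nat_core (n K i : ℕ) (h : 2 * K ≤ n) (hi : i < K) :
    (n - K).choose (K - (i + 1)) * (n - 2 * K) ≤ 2 * K * ((n - K).choose (K - i)) := by
  obtain ⟨a, ha⟩ := Nat.exists_eq_add_of_le h
  set b := K - (i + 1) with hb
  have e1 : n - K = K + a := by omega
  have e2 : n - 2 * K = a := by omega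
  have e3 : K - i = b + 1 := by omega
  rw [e1, e2, e3]
  have hcs := Nat.choose_succ_right_eq (K + a) b
  have hKab : K + a - b = (K - b) + a := by omega
  have key : a * (b + 1) ≤ 2 * K * (K + a - b) := by
    have h1 : b + 1 ≤ K := by omega
    have h2 : a ≤ K + a - b := by omega
    calc a * (b + 1) ≤ a * K := Nat.mul_le_mul_left a h1
      _ ≤ 2 * (K + a - b) * K := Nat.mul_le_mul_right K (by omega)
      _ = 2 * K * (K + a - b) := by ring
  have : (K + a).choose b * a * (b + 1) ≤ 2 * K * (K + a).choose (b + 1) * (b + 1) := by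
    calc (K + a).choose b * a * (b + 1) = (K + a).choose b * (a * (b + 1)) := by ring
      _ ≤ (K + a).choose b * (2 * K * (K + a - b)) := Nat.mul_le_mul_left _ key
      _ = 2 * K * ((K + a).choose b * (K + a - b)) := by ring
      _ = 2 * K * ((K + a).choose (b + 1) * (b + 1)) := by rw [hcs]
      _ = 2 * K * (K + a).choose (b + 1) * (b + 1) := by ring
  exact Nat.le_of_mul_le_mul_right this (by omega)

lemma real_core (n K i : ℕ) (hK : 0 < K) (h : 2 * K ≤ n) (hi : i < K) :
    ((n - K).choose (K - (i + 1)) : ℝ) * (1 - (2 * K : ℝ) / n)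
      ≤ (2 * K : ℝ) / n * ((n - K).choose (K - i) : ℝ) := by
  have hn : (0:ℝ) < n := by exact_mod_cast (by omega : 0 < n)
  have hq : (1 : ℝ) - (2 * K : ℝ) / n = ((n - 2 * K : ℕ) : ℝ) / n := by
    rw [Nat.cast_sub h]
    push_cast
    field_simp
  rw [hq, ← mul_div_assoc, div_mul_eq_mul_div, div_le_div_iff_of_pos_right hn]
  exact_mod_cast nat_core n K i h hi

lemma step (n K i : ℕ) (hK : 0 < K) (h : 2 * K ≤ n) (hi : i < K)
    (hle : fH n K i ≤ fB n K i) : fH n K (i + 1) ≤ fB n K (i + 1) := by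
  have hn : (0:ℝ) < n := by exact_mod_cast (by omega : 0 < n)
  have hfH : 0 < fH n K i := fH_pos n K i h (le_of_lt hi)
  have hfB : 0 < fB n K i := lt_of_lt_of_le hfH hle
  have hD : (0:ℝ) < n.choose K := by exact_mod_cast Nat.choose_pos (by omega : K ≤ n)
  set p : ℝ := (2 * K : ℝ) / n with hpdef
  have hp : 0 ≤ p := by positivity
  have hqnn : (0:ℝ) ≤ 1 - p := by
    rw [sub_nonneg, hpdef, div_le_one hn]; exact_mod_cast h
  have cross : fH n K (i + 1) * fB n K i ≤ fB n K (i + 1) * fH n K i := by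
    unfold fH fB
    rw [← hpdef]
    have e3 : K - i = (K - (i + 1)) + 1 := by omega
    rw [e3, pow_succ, pow_succ]
    set A : ℝ := (K.choose (i+1) : ℝ)
    set C : ℝ := (K.choose i : ℝ)
    set B : ℝ := ((n - K).choose (K - (i+1)) : ℝ)
    set E : ℝ := ((n - K).choose ((K - (i+1)) + 1) : ℝ)
    have hA : 0 ≤ A := by positivity
    have hC : 0 ≤ C := by positivity
    have hcore : B * (1 - p) ≤ p * E := by
      have := real_core n K i hK h hi
      rw [e3] at this
      exact this
    calc A * B / (n.choose K : ℝ) * (C * p ^ i * ((1 - p) ^ (K - (i+1)) * (1 - p)))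
        = (A * C / (n.choose K : ℝ) * p ^ i * (1 - p) ^ (K - (i+1))) * (B * (1 - p)) := by ring
      _ ≤ (A * C / (n.choose K : ℝ) * p ^ i * (1 - p) ^ (K - (i+1))) * (p * E) := by
          apply mul_le_mul_of_nonneg_left hcore
          positivity
      _ = A * (p ^ i * p) * (1 - p) ^ (K - (i+1)) * (C * E / (n.choose K : ℝ)) := by ring
  have h2 : fH n K i / fB n K i ≤ 1 := div_le_one_of_le₀ hle (le_of_lt hfB)
  calc fH n K (i + 1) ≤ fB n K (i + 1) * fH n K i / fB n K i := (le_div_iff₀ hfB).mpr cross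
    _ = fB n K (i + 1) * (fH n K i / fB n K i) := mul_div_assoc _ _ _
    _ ≤ fB n K (i + 1) * 1 := mul_le_mul_of_nonneg_left h2 (fB_nonneg n K (i+1) hK h)
    _ = fB n K (i + 1) := mul_one _

lemma mono (n K : ℕ) (hK : 0 < K) (h : 2 * K ≤ n) :
    ∀ d i, i + d ≤ K → fH n K i ≤ fB n K i → fH n K (i + d) ≤ fB n K (i + d) := by
  intro d
  induction d with
  | zero => intro i _ hle; simpa using hle
  | succ d ih =>
      intro i hid hle
      have : i + (d + 1) = (i + d) + 1 := by omega
      rw [this]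
      exact step n K (i + d) hK h (by omega) (ih i (by omega) hle)

/-- If `H ~ Hypergeometric(n, K, K)` and `K ≤ n/2`, then `H` is stochastically
dominated by `Binomial(K, 2K/n)`: for every `t`, `P(H ≥ t) ≤ P(B ≥ t)`. -/
theorem hypergeometric_stochDom_binomial (n K : ℕ) (hK : 0 < K) (h : 2 * K ≤ n) :
    ∀ t : ℕ,
      (∑ i ∈ Finset.Icc t K,
          ((K.choose i : ℝ) * ((n - K).choose (K - i) : ℝ)) / (n.choose K : ℝ))
        ≤ ∑ i ∈ Finset.Icc t K,
            (K.choose i : ℝ) * ((2 * K : ℝ) / n) ^ i * (1 - (2 * K : ℝ) / n) ^ (K - i) := by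
  intro t
  show ∑ i ∈ Finset.Icc t K, fH n K i ≤ ∑ i ∈ Finset.Icc t K, fB n K i
  by_cases ht : t ≤ K
  · by_cases hc : ∀ i < t, fB n K i ≤ fH n K i
    · have hIcc : Finset.Icc t K = Finset.Ico t (K + 1) := by
        rw [Finset.Ico_add_one_right_eq_Icc]
      have splitH : (∑ i ∈ Finset.range t, fH n K i) + ∑ i ∈ Finset.Icc t K, fH n K i = 1 := by
        rw [hIcc, Finset.range_eq_Ico,
          Finset.sum_Ico_consecutive _ (Nat.zero_le t) (by omega : t ≤ K + 1),
          ← Finset.range_eq_Ico]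
        exact sum_fH n K h
      have splitB : (∑ i ∈ Finset.range t, fB n K i) + ∑ i ∈ Finset.Icc t K, fB n K i = 1 := by
        rw [hIcc, Finset.range_eq_Ico,
          Finset.sum_Ico_consecutive _ (Nat.zero_le t) (by omega : t ≤ K + 1),
          ← Finset.range_eq_Ico]
        exact sum_fB n K hK h
      have hhead : ∑ i ∈ Finset.range t, fB n K i ≤ ∑ i ∈ Finset.range t, fH n K i :=
        Finset.sum_le_sum fun i hi => hc i (Finset.mem_range.mp hi)
      linarith
    · push_neg at hc
      obtain ⟨i0, hi0t, hlt⟩ := hc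
      apply Finset.sum_le_sum
      intro j hj
      rw [Finset.mem_Icc] at hj
      have : j = i0 + (j - i0) := by omega
      rw [this]
      exact mono n K hK h (j - i0) i0 (by omega) (le_of_lt hlt)
  · rw [Finset.Icc_eq_empty (by omega)]
    simp
end

section
/- Let λ > 0, and let B ~ Binomial(k_R, 2k_R/n) and B' ~ Binomial(k_L, 2k_L/n) be independent, with 2λ·k_L ≤ 1 and 2k_R, 2k_L ≤ n. Then E[exp(2λ B B')] ≤ [1 + (2k_L/n)·(exp(8 (k_R²/n) λ) − 1)]^{k_L}. -/
open Finset

private lemma exp_le_one_add_add_sq {x : ℝ} (h1 : 0 ≤ x) (h2 : x ≤ 1) :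
    Real.exp x ≤ 1 + x + x ^ 2 := by
  calc Real.exp x ≤ _ := Real.exp_bound' h1 h2 zero_lt_three
    _ ≤ 1 + x + x ^ 2 := by
      erw [Finset.sum_range_succ]
      repeat rw [Finset.sum_range_succ]
      norm_num [Nat.factorial]
      nlinarith

private lemma binom_mgf (m : ℕ) (p x : ℝ) :
    ∑ i ∈ Finset.range (m + 1), (m.choose i : ℝ) * p ^ i * (1 - p) ^ (m - i) * x ^ i
      = (1 + p * (x - 1)) ^ m := by
  have : (1 + p * (x - 1)) ^ m = (p * x + (1 - p)) ^ m := by ring_nf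
  rw [this, add_pow]
  refine Finset.sum_congr rfl fun i _ => ?_
  rw [mul_pow]
  ring

/-- For independent `B ~ Binomial(k_R, 2k_R/n)` and `B' ~ Binomial(k_L, 2k_L/n)`
with `2λk_L ≤ 1` and `2k_R, 2k_L ≤ n`:
`E[exp(2λBB')] ≤ (1 + (2k_L/n)(exp(8(k_R²/n)λ) − 1))^{k_L}`. -/
theorem binomial_product_mgf_bound (n kR kL : ℕ) (hkR : 0 < kR) (hkL : 0 < kL)
    (hR : 2 * kR ≤ n) (hL : 2 * kL ≤ n) (lam : ℝ) (hlam : 0 < lam)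
    (hsmall : 2 * lam * kL ≤ 1) :
    ∑ i ∈ Finset.range (kR + 1), ∑ j ∈ Finset.range (kL + 1),
        ((kR.choose i : ℝ) * ((2 * kR : ℝ) / n) ^ i * (1 - (2 * kR : ℝ) / n) ^ (kR - i)) *
        ((kL.choose j : ℝ) * ((2 * kL : ℝ) / n) ^ j * (1 - (2 * kL : ℝ) / n) ^ (kL - j)) *
          Real.exp (2 * lam * i * j)
      ≤ (1 + ((2 * kL : ℝ) / n) * (Real.exp (8 * ((kR : ℝ) ^ 2 / n) * lam) - 1)) ^ kL := by
  have hn : (0 : ℝ) < n := by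
    have : 0 < n := lt_of_lt_of_le (by omega) hR
    exact_mod_cast this
  set p : ℝ := (2 * kR : ℝ) / n with hp
  set q : ℝ := (2 * kL : ℝ) / n with hq
  set c : ℝ := 8 * ((kR : ℝ) ^ 2 / n) * lam with hc
  have hp0 : 0 ≤ p := by positivity
  have hp1 : p ≤ 1 := by
    rw [hp, div_le_one hn]; exact_mod_cast hR
  have hq0 : 0 ≤ q := by positivity
  have hq1 : q ≤ 1 := by
    rw [hq, div_le_one hn]; exact_mod_cast hL
  -- per-j bound on the inner (over i) binomial MGF
  have key : ∀ j ∈ Finset.range (kL + 1),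
      (1 + p * (Real.exp (2 * lam * j) - 1)) ^ kR ≤ Real.exp (c * j) := by
    intro j hj
    have hjle : (j : ℝ) ≤ kL := by
      have := Finset.mem_range.mp hj; exact_mod_cast Nat.lt_succ_iff.mp this
    have hx0 : (0 : ℝ) ≤ 2 * lam * j := by positivity
    have hx1 : 2 * lam * j ≤ 1 := by
      calc 2 * lam * (j : ℝ) ≤ 2 * lam * kL := by
            apply mul_le_mul_of_nonneg_left hjle (by positivity)
        _ ≤ 1 := hsmall
    have hexp : Real.exp (2 * lam * j) - 1 ≤ 4 * lam * j := by
      have := exp_le_one_add_add_sq hx0 hx1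
      nlinarith [sq_nonneg (2 * lam * j)]
    have hbase : 1 + p * (Real.exp (2 * lam * j) - 1) ≤ Real.exp (p * (4 * lam * j)) := by
      calc 1 + p * (Real.exp (2 * lam * j) - 1)
          ≤ 1 + p * (4 * lam * j) := by
            have := mul_le_mul_of_nonneg_left hexp hp0; linarith
        _ ≤ Real.exp (p * (4 * lam * j)) := by
            have := Real.add_one_le_exp (p * (4 * lam * j)); linarith
    have hbase0 : 0 ≤ 1 + p * (Real.exp (2 * lam * j) - 1) := by
      have : (1 : ℝ) ≤ Real.exp (2 * lam * j) := Real.one_le_exp hx0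
      nlinarith
    calc (1 + p * (Real.exp (2 * lam * j) - 1)) ^ kR
        ≤ Real.exp (p * (4 * lam * j)) ^ kR := pow_le_pow_left₀ hbase0 hbase kR
      _ = Real.exp ((kR : ℝ) * (p * (4 * lam * j))) := by
          rw [← Real.exp_nat_mul]
      _ ≤ Real.exp (c * j) := by
          apply Real.exp_le_exp.mpr
          rw [hc, hp]
          rw [show (kR : ℝ) * ((2 * kR : ℝ) / n * (4 * lam * j))
              = 8 * ((kR : ℝ) ^ 2 / n) * lam * j by field_simp; ring]
  calc ∑ i ∈ Finset.range (kR + 1), ∑ j ∈ Finset.range (kL + 1),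
        ((kR.choose i : ℝ) * p ^ i * (1 - p) ^ (kR - i)) *
        ((kL.choose j : ℝ) * q ^ j * (1 - q) ^ (kL - j)) * Real.exp (2 * lam * i * j)
      = ∑ j ∈ Finset.range (kL + 1),
          ((kL.choose j : ℝ) * q ^ j * (1 - q) ^ (kL - j)) *
          ∑ i ∈ Finset.range (kR + 1),
            (kR.choose i : ℝ) * p ^ i * (1 - p) ^ (kR - i) * Real.exp (2 * lam * j) ^ i := by
        rw [Finset.sum_comm]
        refine Finset.sum_congr rfl fun j _ => ?_
        rw [Finset.mul_sum]
        refine Finset.sum_congr rfl fun i _ => ?_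
        rw [show (2 : ℝ) * lam * i * j = (i : ℕ) * (2 * lam * j) by ring,
          Real.exp_nat_mul]
        ring
    _ = ∑ j ∈ Finset.range (kL + 1),
          ((kL.choose j : ℝ) * q ^ j * (1 - q) ^ (kL - j)) *
            (1 + p * (Real.exp (2 * lam * j) - 1)) ^ kR := by
        refine Finset.sum_congr rfl fun j _ => ?_
        rw [binom_mgf]
    _ ≤ ∑ j ∈ Finset.range (kL + 1),
          ((kL.choose j : ℝ) * q ^ j * (1 - q) ^ (kL - j)) * Real.exp (c * j) := by
        refine Finset.sum_le_sum fun j hj => ?_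
        have hw : 0 ≤ (kL.choose j : ℝ) * q ^ j * (1 - q) ^ (kL - j) := by
          have : (0 : ℝ) ≤ 1 - q := by linarith
          positivity
        exact mul_le_mul_of_nonneg_left (key j hj) hw
    _ = (1 + q * (Real.exp c - 1)) ^ kL := by
        rw [← binom_mgf]
        refine Finset.sum_congr rfl fun j _ => ?_
        rw [show Real.exp c ^ j = Real.exp ((j : ℕ) * c) by rw [Real.exp_nat_mul],
          mul_comm (j : ℝ) c]
end
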